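/- For every integer m ≥ 2 and every natural number s, the following identity holds in ℤ: ∑_{i=2}^{m} C(m, i)·(i − 1)·s^i = s²·(s + 1)^{m−2} + (m − 2)·(s + 1)^{m−1}·s − s·∑_{i=0}^{m−3}(s + 1)^i, where C(m, i) denotes the binomial coefficient and the last sum is empty (equal to 0) when m = 2. -/

import Mathlib

open Finset

lemma L1 (n : ℕ) (x : ℤ) : ∑ i ∈ range (n+1), (n.choose i : ℤ) * x ^ i = (x + 1) ^ n := by
  rw [add_pow]
  exact Finset.sum_congr rfl fun i _ => by ring

lemma L2 (n : ℕ) (x : ℤ) :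
    ∑ i ∈ range (n+1), (n.choose i : ℤ) * (i : ℤ) * x ^ i = n * x * (x + 1) ^ (n - 1) := by
  cases n with
  | zero => simp
  | succ k =>
    rw [Finset.sum_range_succ']
    have step : ∀ i : ℕ, ((k+1).choose (i+1) : ℤ) * ((i:ℤ)+1) * x ^ (i+1)
        = ((k:ℤ)+1) * x * ((k.choose i : ℤ) * x ^ i) := by
      intro i
      have h := Nat.add_one_mul_choose_eq k i
      have h' : ((k+1 : ℕ) : ℤ) * (k.choose i : ℤ) = ((k+1).choose (i+1) : ℤ) * ((i:ℤ)+1) := by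
        exact_mod_cast congrArg (Nat.cast : ℕ → ℤ) h
      push_cast at h' ⊢
      linear_combination x ^ (i + 1) * h'.symm
    simp only [Nat.cast_add, Nat.cast_one] at *
    calc (∑ i ∈ range (k+1), ((k+1).choose (i+1) : ℤ) * ((i:ℤ)+1) * x ^ (i+1))
          + ((k+1).choose 0 : ℤ) * (0:ℤ) * x ^ 0
        = ((k:ℤ)+1) * x * ∑ i ∈ range (k+1), (k.choose i : ℤ) * x ^ i := by
          rw [Finset.mul_sum]
          simp only [mul_zero, zero_mul, add_zero]
          exact Finset.sum_congr rfl fun i _ => step i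
      _ = ((k:ℤ)+1) * x * (x+1)^k := by rw [L1]
      _ = ((k+1:ℕ):ℤ) * x * (x+1)^(k+1-1) := by push_cast; ring

/-- The identity `J_m^{(s)} = W_m^{(s)}` of the paper:
`∑_{i=2}^{m} C(m,i)(i-1)s^i = s²(s+1)^{m-2} + (m-2)(s+1)^{m-1}s - s ∑_{i=0}^{m-3}(s+1)^i`. -/
theorem J_eq_W (m : ℕ) (hm : 2 ≤ m) (s : ℕ) :
    ∑ i ∈ Finset.Icc 2 m, (m.choose i : ℤ) * ((i : ℤ) - 1) * (s : ℤ) ^ i =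
      (s : ℤ) ^ 2 * ((s : ℤ) + 1) ^ (m - 2) +
        ((m : ℤ) - 2) * ((s : ℤ) + 1) ^ (m - 1) * (s : ℤ) -
        (s : ℤ) * ∑ i ∈ Finset.range (m - 2), ((s : ℤ) + 1) ^ i := by
  obtain ⟨n, rfl⟩ : ∃ n, m = n + 2 := ⟨m - 2, by omega⟩
  set x : ℤ := (s : ℤ) with hx
  -- geometric sum
  have hg : x * ∑ i ∈ range (n + 2 - 2), (x + 1) ^ i = (x + 1) ^ n - 1 := by
    have h := geom_sum_mul (x + 1) n
    simp only [add_sub_cancel_right] at h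
    simpa [Nat.add_sub_cancel, mul_comm] using h
  -- full range sum
  have hfull : ∑ i ∈ range (n + 3), ((n+2).choose i : ℤ) * ((i : ℤ) - 1) * x ^ i
      = ((n:ℤ)+2) * x * (x+1)^(n+1) - (x+1)^(n+2) := by
    have h1 := L1 (n+2) x
    have h2 := L2 (n+2) x
    rw [show n + 2 - 1 = n + 1 by omega] at h2
    calc ∑ i ∈ range (n + 3), ((n+2).choose i : ℤ) * ((i : ℤ) - 1) * x ^ i
        = (∑ i ∈ range (n + 3), ((n+2).choose i : ℤ) * (i:ℤ) * x ^ i)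
          - ∑ i ∈ range (n + 3), ((n+2).choose i : ℤ) * x ^ i := by
          rw [← Finset.sum_sub_distrib]
          exact Finset.sum_congr rfl fun i _ => by ring
      _ = ((n:ℤ)+2) * x * (x+1)^(n+1) - (x+1)^(n+2) := by
          rw [show n + 3 = (n+2)+1 from rfl, h1, h2]; push_cast; ring
  -- relate Icc sum to range sum
  have hicc : ∑ i ∈ Finset.Icc 2 (n+2), ((n+2).choose i : ℤ) * ((i : ℤ) - 1) * x ^ i
      = (∑ i ∈ range (n + 3), ((n+2).choose i : ℤ) * ((i : ℤ) - 1) * x ^ i) + 1 := by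
    rw [Finset.sum_range_succ' _ (n+2), Finset.sum_range_succ' _ (n+1)]
    rw [show Finset.Icc 2 (n+2) = Finset.Ico 2 (n+3) from (Finset.Ico_add_one_right_eq_Icc 2 (n+2)).symm,
      Finset.sum_Ico_eq_sum_range]
    have hn : n + 3 - 2 = n + 1 := by omega
    rw [hn]
    have hcong : ∀ i ∈ range (n+1), ((n+2).choose (2+i) : ℤ) * ((2+i : ℕ) - 1 : ℤ) * x ^ (2+i)
        = ((n+2).choose (i+1+1) : ℤ) * ((i+1+1 : ℕ) - 1 : ℤ) * x ^ (i+1+1) := by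
      intro i _
      rw [show 2 + i = i + 1 + 1 by omega]
    rw [Finset.sum_congr rfl hcong]
    simp only [Nat.choose_zero_right, Nat.cast_one, Nat.cast_zero, Nat.cast_ofNat]
    push_cast
    ring
  rw [hicc, hfull, hg]
  have h2 : n + 2 - 2 = n := by omega
  have h1 : n + 2 - 1 = n + 1 := by omega
  rw [h2, h1] at *
  push_cast
  ring
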